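/- Let P be a probability distribution on a finite set A and, for each n, let M_n be a positive integer. Then there exists a function f_n: Aⁿ → {1,…,M_n} such that d₁((Pⁿ)^{f_n(Aⁿ)}) ≤ 2·Pⁿ{ aⁿ : Pⁿ(aⁿ) ≥ 1/M_n } + 2·Σ_{Q ∈ T_n} M_n · Pⁿ(T(Q)) · e^{−n(D(Q‖P) + H(Q))} + 2|T_n|/M_n, where Pⁿ is the n-fold i.i.d. product of P. -/

import Mathlib

open Finset
open scoped Classical

/-- The empirical distribution (type) of a sequence `aa : Fin n → A`. -/
noncomputable def empDist {A : Type*} [Fintype A] (n : ℕ) (aa : Fin n → A) : A → ℝ :=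
  fun a => ((univ.filter (fun i : Fin n => aa i = a)).card : ℝ) / n

/-- The set `T_n` of all types of length `n` on `A`. -/
noncomputable def typeSet (A : Type*) [Fintype A] (n : ℕ) : Finset (A → ℝ) :=
  Finset.image (empDist n) univ

/-- Shannon entropy of a distribution. -/
noncomputable def shEnt {A : Type*} [Fintype A] (Q : A → ℝ) : ℝ :=
  ∑ a, Real.negMulLog (Q a)

/-- Kullback–Leibler divergence `D(Q‖P)`. -/
noncomputable def klDiv' {A : Type*} [Fintype A] (Q P : A → ℝ) : ℝ :=
  ∑ a, Q a * (Real.log (Q a) - Real.log (P a))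

section Aux
set_option linter.unusedSectionVars false
variable {A : Type*} [Fintype A]

noncomputable def pmass (P : A → ℝ) {n : ℕ} (x : Fin n → A) : ℝ := ∏ i, P (x i)

lemma pmass_nonneg {P : A → ℝ} (hP0 : ∀ a, 0 ≤ P a) {n : ℕ} (x : Fin n → A) :
    0 ≤ pmass P x := Finset.prod_nonneg (fun i _ => hP0 (x i))

noncomputable def cnt {n : ℕ} (x : Fin n → A) (a : A) : ℕ :=
  (univ.filter (fun i : Fin n => x i = a)).card

lemma cnt_le {n : ℕ} (x : Fin n → A) (a : A) : cnt x a ≤ n := by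
  have := Finset.card_filter_le (univ : Finset (Fin n)) (fun i => x i = a)
  simpa [cnt] using this

lemma cnt_eq_of_empDist_eq {n : ℕ} {x y : Fin n → A}
    (h : empDist n x = empDist n y) (a : A) : cnt x a = cnt y a := by
  rcases Nat.eq_zero_or_pos n with hn | hn
  · have h1 := cnt_le x a
    have h2 := cnt_le y a
    omega
  · have := congrFun h a
    simp only [empDist] at this
    have hn' : (n : ℝ) ≠ 0 := by positivity
    field_simp at this
    exact_mod_cast this

lemma nQ_eq_cnt {n : ℕ} (x : Fin n → A) (a : A) :
    (n : ℝ) * empDist n x a = (cnt x a : ℝ) := by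
  rcases Nat.eq_zero_or_pos n with hn | hn
  · subst hn
    have : cnt x a = 0 := by
      have := cnt_le x a; omega
    simp [this]
  · have hn' : (n : ℝ) ≠ 0 := by positivity
    simp only [empDist, cnt]
    field_simp

lemma pmass_eq_prod_pow (P : A → ℝ) {n : ℕ} (x : Fin n → A) :
    pmass P x = ∏ a, P a ^ cnt x a := by
  rw [pmass]
  rw [← Finset.prod_fiberwise_of_maps_to (fun i _ => Finset.mem_univ (x i))
      (fun i => P (x i))]
  refine Finset.prod_congr rfl fun a _ => ?_
  rw [show (∏ i ∈ univ.filter fun i => x i = a, P (x i)) = ∏ i ∈ univ.filter fun i => x i = a, P a from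
    Finset.prod_congr rfl fun i hi => by rw [(Finset.mem_filter.mp hi).2]]
  simp [cnt]

lemma pmass_eq_of_empDist_eq {P : A → ℝ} {n : ℕ} {x y : Fin n → A}
    (h : empDist n x = empDist n y) : pmass P x = pmass P y := by
  rw [pmass_eq_prod_pow, pmass_eq_prod_pow]
  exact Finset.prod_congr rfl fun a _ => by rw [cnt_eq_of_empDist_eq h a]

lemma pow_le_exp_mul_log {t : ℝ} (ht : 0 ≤ t) (c : ℕ) :
    t ^ c ≤ Real.exp ((c : ℝ) * Real.log t) := by
  rcases eq_or_lt_of_le ht with h | h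
  · rcases Nat.eq_zero_or_pos c with hc | hc
    · simp [hc]
    · rw [← h]
      calc (0:ℝ) ^ c = 0 := zero_pow (by omega)
        _ ≤ _ := (Real.exp_pos _).le
  · rw [← Real.exp_log h, ← Real.exp_nat_mul, Real.exp_log h]

lemma pmass_le_exp {P : A → ℝ} (hP0 : ∀ a, 0 ≤ P a) {n : ℕ} (x : Fin n → A) :
    pmass P x ≤ Real.exp (-(n : ℝ) * (klDiv' (empDist n x) P + shEnt (empDist n x))) := by
  have hkey : -(n : ℝ) * (klDiv' (empDist n x) P + shEnt (empDist n x))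
      = ∑ a, (cnt x a : ℝ) * Real.log (P a) := by
    rw [klDiv', shEnt, ← Finset.sum_add_distrib, Finset.mul_sum]
    refine Finset.sum_congr rfl fun a _ => ?_
    rw [Real.negMulLog]
    have := nQ_eq_cnt x a
    linear_combination (Real.log (P a)) * this
  rw [hkey, Real.exp_sum, pmass_eq_prod_pow]
  refine Finset.prod_le_prod (fun a _ => pow_nonneg (hP0 a) _) fun a _ => ?_
  exact pow_le_exp_mul_log (hP0 a) _

lemma pmass_total {P : A → ℝ} (hP1 : ∑ a, P a = 1) (n : ℕ) :
    ∑ x : Fin n → A, pmass P x = 1 := by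
  have : (∏ _i : Fin n, ∑ a ∈ univ, P a) = ∑ x ∈ Fintype.piFinset (fun _ : Fin n => univ),
      ∏ i, P (x i) := Finset.prod_univ_sum _ _
  simp only [Fintype.piFinset_univ] at this
  simp only [pmass]
  rw [← this]
  simp [hP1]

end Aux

section Key
set_option linter.unusedSectionVars false
variable {A : Type*} [Fintype A]

noncomputable def enc {n : ℕ} (x : Fin n → A) : ℕ := (Fintype.equivFin (Fin n → A) x : ℕ)

lemma enc_lt {n : ℕ} (x : Fin n → A) : enc x < Fintype.card (Fin n → A) :=
  ((Fintype.equivFin (Fin n → A)) x).isLt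

lemma enc_inj {n : ℕ} {x y : Fin n → A} (h : enc x = enc y) : x = y :=
  (Fintype.equivFin (Fin n → A)).injective (Fin.val_injective h)

lemma fib_img_ne {n : ℕ} (x : Fin n → A) :
    ((univ.filter (fun y : Fin n → A => empDist n y = empDist n x)).image enc).Nonempty := by
  apply Finset.Nonempty.image
  exact ⟨x, Finset.mem_filter.mpr ⟨Finset.mem_univ x, rfl⟩⟩

noncomputable def tIdx {n : ℕ} (x : Fin n → A) : ℕ :=
  ((univ.filter (fun y : Fin n → A => empDist n y = empDist n x)).image enc).min'
    (fib_img_ne x)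

lemma tIdx_congr {n : ℕ} {x y : Fin n → A} (h : empDist n x = empDist n y) :
    tIdx x = tIdx y := by
  unfold tIdx
  congr 1
  ext z
  simp [h]

lemma tIdx_spec {n : ℕ} (x : Fin n → A) :
    ∃ z : Fin n → A, empDist n z = empDist n x ∧ enc z = tIdx x := by
  have h := Finset.min'_mem
    ((univ.filter (fun y : Fin n → A => empDist n y = empDist n x)).image enc)
    (fib_img_ne x)
  rw [Finset.mem_image] at h
  obtain ⟨z, hz, he⟩ := h
  exact ⟨z, (Finset.mem_filter.mp hz).2, he⟩

noncomputable def keyN {n : ℕ} (x : Fin n → A) : ℕ :=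
  tIdx x * Fintype.card (Fin n → A) + enc x

lemma keyN_inj {n : ℕ} {x y : Fin n → A} (h : keyN x = keyN y) : x = y := by
  have hx := enc_lt x
  have hy := enc_lt y
  have hmod : keyN x % Fintype.card (Fin n → A) = keyN y % Fintype.card (Fin n → A) := by
    rw [h]
  unfold keyN at hmod
  rw [Nat.mul_add_mod', Nat.mul_add_mod', Nat.mod_eq_of_lt hx, Nat.mod_eq_of_lt hy] at hmod
  exact enc_inj hmod

lemma tIdx_le_of_keyN_le {n : ℕ} {x y : Fin n → A} (h : keyN x ≤ keyN y) :
    tIdx x ≤ tIdx y := by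
  by_contra hc
  push_neg at hc
  have hx := enc_lt x
  have : keyN y < keyN x := by
    unfold keyN
    calc tIdx y * Fintype.card (Fin n → A) + enc y
        < (tIdx y + 1) * Fintype.card (Fin n → A) := by
          have := enc_lt y; nlinarith
      _ ≤ tIdx x * Fintype.card (Fin n → A) := Nat.mul_le_mul_right _ (by omega)
      _ ≤ _ := Nat.le_add_right _ _
  omega

lemma emp_block {n : ℕ} {w w' y : Fin n → A} (hww' : empDist n w = empDist n w')
    (h1 : keyN w ≤ keyN y) (h2 : keyN y ≤ keyN w') : empDist n y = empDist n w := by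
  have t1 : tIdx w ≤ tIdx y := tIdx_le_of_keyN_le h1
  have t2 : tIdx y ≤ tIdx w' := tIdx_le_of_keyN_le h2
  have t3 : tIdx w' = tIdx w := tIdx_congr hww'.symm
  have teq : tIdx y = tIdx w := by omega
  obtain ⟨z, hz, he⟩ := tIdx_spec y
  obtain ⟨z', hz', he'⟩ := tIdx_spec w
  have : z = z' := enc_inj (by rw [he, he', teq])
  rw [← hz, this, hz']

end Key

section Main
set_option linter.unusedSectionVars false
set_option maxHeartbeats 1000000
variable {A : Type*} [Fintype A]

noncomputable def SmS (P : A → ℝ) (n M : ℕ) : Finset (Fin n → A) :=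
  univ.filter (fun x => ¬((1:ℝ)/M ≤ pmass P x))

noncomputable def cum (P : A → ℝ) (n M : ℕ) (x : Fin n → A) : ℝ :=
  ∑ y ∈ (SmS P n M).filter (fun y => keyN y < keyN x), pmass P y

noncomputable def binN (P : A → ℝ) (n M : ℕ) (x : Fin n → A) : ℕ :=
  min (⌊(M:ℝ) * cum P n M x⌋₊) (M-1)

noncomputable def GG (P : A → ℝ) (n M : ℕ) (j : ℕ) : ℝ :=
  ∑ y ∈ (SmS P n M).filter (fun y => binN P n M y < j), pmass P y

noncomputable def Cr (P : A → ℝ) (n M : ℕ) (j : ℕ) : Finset (Fin n → A) :=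
  (SmS P n M).filter
    (fun w => cum P n M w < (j:ℝ)/M ∧ (j:ℝ)/M ≤ cum P n M w + pmass P w)

noncomputable def CrS (P : A → ℝ) (n M : ℕ) (j : ℕ) : ℝ := ∑ w ∈ Cr P n M j, pmass P w

variable {P : A → ℝ} {n M : ℕ}

lemma SmS_small {x : Fin n → A} (hx : x ∈ SmS P n M) : pmass P x < 1/(M:ℝ) :=
  not_le.mp (Finset.mem_filter.mp hx).2

lemma cum_nonneg (hP0 : ∀ a, 0 ≤ P a) (x : Fin n → A) : 0 ≤ cum P n M x :=
  Finset.sum_nonneg fun y _ => pmass_nonneg hP0 y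

lemma cum_mono (hP0 : ∀ a, 0 ≤ P a) {x y : Fin n → A} (h : keyN x ≤ keyN y) :
    cum P n M x ≤ cum P n M y := by
  apply Finset.sum_le_sum_of_subset_of_nonneg
  · exact Finset.monotone_filter_right _ (fun w _ hw => lt_of_lt_of_le hw h)
  · exact fun w _ _ => pmass_nonneg hP0 w

lemma cum_succ (hP0 : ∀ a, 0 ≤ P a) {x y : Fin n → A} (hy : y ∈ SmS P n M)
    (h : keyN y < keyN x) : cum P n M y + pmass P y ≤ cum P n M x := by
  have hnm : y ∉ (SmS P n M).filter (fun w => keyN w < keyN y) := by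
    simp [Finset.mem_filter]
  have hsub : insert y ((SmS P n M).filter (fun w => keyN w < keyN y))
      ⊆ (SmS P n M).filter (fun w => keyN w < keyN x) := by
    intro w hw
    rcases Finset.mem_insert.mp hw with rfl | hw'
    · exact Finset.mem_filter.mpr ⟨hy, h⟩
    · obtain ⟨h1, h2⟩ := Finset.mem_filter.mp hw'
      exact Finset.mem_filter.mpr ⟨h1, h2.trans h⟩
  have hins : ∑ w ∈ insert y ((SmS P n M).filter (fun w => keyN w < keyN y)), pmass P w
      = pmass P y + cum P n M y := Finset.sum_insert hnm
  have hle := Finset.sum_le_sum_of_subset_of_nonneg hsub (fun w _ _ => pmass_nonneg hP0 w)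
  rw [hins] at hle
  calc cum P n M y + pmass P y = pmass P y + cum P n M y := by ring
    _ ≤ _ := hle

lemma binN_lt (hM : 0 < M) (x : Fin n → A) : binN P n M x < M := by
  have : binN P n M x ≤ M - 1 := min_le_right _ _
  omega

lemma binN_lt_iff (hP0 : ∀ a, 0 ≤ P a) (hM : 0 < M) {j : ℕ} (hj : j ≤ M - 1)
    (x : Fin n → A) : binN P n M x < j ↔ cum P n M x < (j:ℝ)/M := by
  have hM' : (0:ℝ) < M := by exact_mod_cast hM
  have h0 : 0 ≤ (M:ℝ) * cum P n M x := mul_nonneg hM'.le (cum_nonneg hP0 x)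
  rw [binN, min_lt_iff]
  constructor
  · rintro (h | h)
    · rw [Nat.floor_lt h0] at h
      rw [lt_div_iff₀ hM']
      linarith
    · omega
  · intro h
    left
    rw [Nat.floor_lt h0]
    rw [lt_div_iff₀ hM'] at h
    linarith

lemma GG_M (hM : 0 < M) : GG P n M M = ∑ y ∈ SmS P n M, pmass P y := by
  rw [GG]
  congr 1
  apply Finset.filter_true_of_mem
  exact fun y _ => binN_lt hM y

lemma sum_SmS_le_one (hP0 : ∀ a, 0 ≤ P a) (hP1 : ∑ a, P a = 1) :
    ∑ y ∈ SmS P n M, pmass P y ≤ 1 := by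
  rw [← pmass_total hP1 n]
  apply Finset.sum_le_sum_of_subset_of_nonneg (Finset.filter_subset _ _)
  exact fun y _ _ => pmass_nonneg hP0 y

lemma CrS_nonneg (hP0 : ∀ a, 0 ≤ P a) (j : ℕ) : 0 ≤ CrS P n M j :=
  Finset.sum_nonneg fun w _ => pmass_nonneg hP0 w

lemma crossing_bound (hP0 : ∀ a, 0 ≤ P a) (hP1 : ∑ a, P a = 1) (hM : 0 < M)
    {j : ℕ} (hjM : j ≤ M) : GG P n M j - (j:ℝ)/M ≤ CrS P n M j := by
  have hM' : (0:ℝ) < M := by exact_mod_cast hM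
  by_cases hle : GG P n M j ≤ (j:ℝ)/M
  · linarith [CrS_nonneg (P := P) (n := n) (M := M) hP0 j]
  · push_neg at hle
    rcases (show j ≤ M - 1 ∨ j = M by omega) with hj | hj
    · have hne : ((SmS P n M).filter (fun y => binN P n M y < j)).Nonempty := by
        by_contra h
        rw [Finset.not_nonempty_iff_eq_empty] at h
        have h0 : GG P n M j = 0 := by rw [GG, h, Finset.sum_empty]
        have : 0 ≤ (j:ℝ)/M := by positivity
        linarith
      obtain ⟨w, hw, hwmax⟩ := Finset.exists_max_image _ keyN hne
      have hwS : w ∈ SmS P n M := (Finset.mem_filter.mp hw).1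
      have hb : cum P n M w < (j:ℝ)/M :=
        (binN_lt_iff hP0 hM hj w).mp (Finset.mem_filter.mp hw).2
      have ha : GG P n M j ≤ cum P n M w + pmass P w := by
        have hnm : w ∉ (SmS P n M).filter (fun y => keyN y < keyN w) := by
          simp [Finset.mem_filter]
        have hsub : (SmS P n M).filter (fun y => binN P n M y < j)
            ⊆ insert w ((SmS P n M).filter (fun y => keyN y < keyN w)) := by
          intro y hy
          rcases eq_or_ne y w with rfl | hne'
          · exact Finset.mem_insert_self _ _
          · apply Finset.mem_insert_of_mem
            refine Finset.mem_filter.mpr ⟨(Finset.mem_filter.mp hy).1, ?_⟩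
            exact lt_of_le_of_ne (hwmax y hy) (fun hk => hne' (keyN_inj hk))
        have hins : ∑ y ∈ insert w ((SmS P n M).filter (fun y => keyN y < keyN w)),
            pmass P y = pmass P w + cum P n M w := Finset.sum_insert hnm
        have hle2 := Finset.sum_le_sum_of_subset_of_nonneg hsub
          (fun y _ _ => pmass_nonneg hP0 y)
        rw [hins] at hle2
        calc GG P n M j = ∑ y ∈ (SmS P n M).filter (fun y => binN P n M y < j),
              pmass P y := rfl
          _ ≤ pmass P w + cum P n M w := hle2
          _ = cum P n M w + pmass P w := by ring
      have hc : (j:ℝ)/M ≤ cum P n M w + pmass P w := le_trans hle.le ha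
      have hwCr : w ∈ Cr P n M j := Finset.mem_filter.mpr ⟨hwS, hb, hc⟩
      have hsingle : pmass P w ≤ CrS P n M j :=
        Finset.single_le_sum (fun y _ => pmass_nonneg hP0 y) hwCr
      linarith
    · exfalso
      rw [hj] at hle
      have hW : GG P n M M ≤ 1 := by
        rw [GG_M hM]; exact sum_SmS_le_one hP0 hP1
      rw [div_self (ne_of_gt hM')] at hle
      linarith

lemma s_eq_GG (m : ℕ) :
    ∑ y ∈ (SmS P n M).filter (fun y => binN P n M y = m), pmass P y
      = GG P n M (m+1) - GG P n M m := by
  have hsub : (SmS P n M).filter (fun y => binN P n M y < m)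
      ⊆ (SmS P n M).filter (fun y => binN P n M y < m+1) :=
    Finset.monotone_filter_right _ (fun y hy => by omega)
  have hset : (SmS P n M).filter (fun y => binN P n M y = m)
      = (SmS P n M).filter (fun y => binN P n M y < m+1)
        \ (SmS P n M).filter (fun y => binN P n M y < m) := by
    ext y
    simp only [Finset.mem_sdiff, Finset.mem_filter]
    constructor
    · rintro ⟨h1, h2⟩
      exact ⟨⟨h1, by omega⟩, fun hc => by omega⟩
    · rintro ⟨⟨h1, h2⟩, h3⟩
      refine ⟨h1, ?_⟩
      by_contra hne
      exact h3 ⟨h1, by omega⟩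
  rw [hset, Finset.sum_sdiff_eq_sub hsub, GG, GG]

lemma C1 (hP0 : ∀ a, 0 ≤ P a) (hP1 : ∑ a, P a = 1) (hM : 0 < M) {m : ℕ} (hm : m < M) :
    (∑ y ∈ (SmS P n M).filter (fun y => binN P n M y = m), pmass P y) - 1/(M:ℝ)
      ≤ CrS P n M (m+1) := by
  have hM' : (0:ℝ) < M := by exact_mod_cast hM
  rw [s_eq_GG]
  by_cases hcase : (m:ℝ)/M ≤ GG P n M m
  · have h4 := crossing_bound (P := P) (n := n) hP0 hP1 hM (j := m+1) (by omega)
    have hcast : ((m+1 : ℕ):ℝ)/M = (m:ℝ)/M + 1/M := by push_cast; ring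
    rw [hcast] at h4
    linarith
  · push_neg at hcase
    have hm1 : m ≤ M - 1 := by omega
    have hall : ∀ y ∈ SmS P n M, binN P n M y < m := by
      by_contra hco
      push_neg at hco
      obtain ⟨z0, hz0S, hz0⟩ := hco
      have hNe : ((SmS P n M).filter (fun y => ¬ binN P n M y < m)).Nonempty :=
        ⟨z0, Finset.mem_filter.mpr ⟨hz0S, by omega⟩⟩
      obtain ⟨z, hz, hzmin⟩ := Finset.exists_min_image _ keyN hNe
      have hzS : z ∈ SmS P n M := (Finset.mem_filter.mp hz).1
      have hzb : ¬ binN P n M z < m := (Finset.mem_filter.mp hz).2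
      have hzc : (m:ℝ)/M ≤ cum P n M z := by
        by_contra hlt
        push_neg at hlt
        exact hzb ((binN_lt_iff hP0 hM hm1 z).mpr hlt)
      have hEq : (SmS P n M).filter (fun y => binN P n M y < m)
          = (SmS P n M).filter (fun y => keyN y < keyN z) := by
        ext y
        simp only [Finset.mem_filter]
        constructor
        · rintro ⟨hyS, hyb⟩
          refine ⟨hyS, ?_⟩
          have hyc : cum P n M y < (m:ℝ)/M := (binN_lt_iff hP0 hM hm1 y).mp hyb
          by_contra hk
          push_neg at hk
          have := cum_mono (P := P) (n := n) (M := M) hP0 hk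
          linarith
        · rintro ⟨hyS, hyk⟩
          refine ⟨hyS, ?_⟩
          by_contra hyb
          have hymem : y ∈ (SmS P n M).filter (fun y => ¬ binN P n M y < m) :=
            Finset.mem_filter.mpr ⟨hyS, hyb⟩
          have := hzmin y hymem
          omega
      have hGme : GG P n M m = cum P n M z := by rw [GG, hEq, cum]
      linarith
    have h1 : (SmS P n M).filter (fun y => binN P n M y < m) = SmS P n M :=
      Finset.filter_true_of_mem hall
    have h2 : (SmS P n M).filter (fun y => binN P n M y < m+1) = SmS P n M :=
      Finset.filter_true_of_mem (fun y hy => by have := hall y hy; omega)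
    have hCr : 0 ≤ CrS P n M (m+1) := CrS_nonneg hP0 _
    have hMp : 0 < (1:ℝ)/M := by positivity
    rw [GG, GG, h1, h2]
    linarith

lemma Cr_subsingleton (hP0 : ∀ a, 0 ≤ P a) {j : ℕ} :
    ∀ w ∈ Cr P n M j, ∀ w' ∈ Cr P n M j, w = w' := by
  have key : ∀ w ∈ Cr P n M j, ∀ w' ∈ Cr P n M j, keyN w < keyN w' → False := by
    intro w hw w' hw' hk
    obtain ⟨hwS, hb, hc⟩ := Finset.mem_filter.mp hw
    obtain ⟨hw'S, hb', hc'⟩ := Finset.mem_filter.mp hw'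
    have := cum_succ (P := P) (n := n) (M := M) hP0 hwS hk
    linarith
  intro w hw w' hw'
  rcases lt_trichotomy (keyN w) (keyN w') with h | h | h
  · exact (key w hw w' hw' h).elim
  · exact keyN_inj h
  · exact (key w' hw' w hw h).elim

end Main

section PerQ
set_option linter.unusedSectionVars false
set_option maxHeartbeats 1000000
variable {A : Type*} [Fintype A]
variable {P : A → ℝ} {n M : ℕ}

lemma perQ (hP0 : ∀ a, 0 ≤ P a) (hM : 0 < M) (Q : A → ℝ) :
    ∑ j ∈ Finset.Icc 1 M, ∑ w ∈ (Cr P n M j).filter (fun w => empDist n w = Q), pmass P w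
      ≤ (M:ℝ) * (∑ x ∈ univ.filter (fun x : Fin n → A => empDist n x = Q), pmass P x)
          * Real.exp (-(n:ℝ) * (klDiv' Q P + shEnt Q)) + 1/(M:ℝ) := by
  have hM' : (0:ℝ) < M := by exact_mod_cast hM
  have hTQ0 : 0 ≤ ∑ x ∈ univ.filter (fun x : Fin n → A => empDist n x = Q), pmass P x :=
    Finset.sum_nonneg fun x _ => pmass_nonneg hP0 x
  by_cases hne : ((SmS P n M).filter (fun x => empDist n x = Q)).Nonempty
  case neg =>
    have hz : ∀ j, (Cr P n M j).filter (fun w => empDist n w = Q) = ∅ := by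
      intro j
      rw [Finset.not_nonempty_iff_eq_empty] at hne
      rw [← Finset.subset_empty, ← hne]
      intro w hw
      obtain ⟨hw1, hw2⟩ := Finset.mem_filter.mp hw
      exact Finset.mem_filter.mpr ⟨(Finset.mem_filter.mp hw1).1, hw2⟩
    have : ∀ j ∈ Finset.Icc 1 M,
        (∑ w ∈ (Cr P n M j).filter (fun w => empDist n w = Q), pmass P w) = 0 := by
      intro j _; rw [hz j, Finset.sum_empty]
    rw [Finset.sum_congr rfl this, Finset.sum_const, smul_zero]
    have he : 0 < Real.exp (-(n:ℝ) * (klDiv' Q P + shEnt Q)) := Real.exp_pos _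
    have h1M : 0 < 1/(M:ℝ) := by positivity
    have hnn : 0 ≤ (M:ℝ) * (∑ x ∈ univ.filter (fun x : Fin n → A => empDist n x = Q),
        pmass P x) * Real.exp (-(n:ℝ) * (klDiv' Q P + shEnt Q)) :=
      mul_nonneg (mul_nonneg hM'.le hTQ0) he.le
    linarith
  case pos =>
    obtain ⟨w0, hw0, hw0min⟩ := Finset.exists_min_image _ keyN hne
    have hw0S : w0 ∈ SmS P n M := (Finset.mem_filter.mp hw0).1
    have hw0Q : empDist n w0 = Q := (Finset.mem_filter.mp hw0).2
    set π : ℝ := pmass P w0 with hπdef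
    have hπ0 : 0 ≤ π := pmass_nonneg hP0 w0
    have hπM : π < 1/(M:ℝ) := SmS_small hw0S
    have hπexp : π ≤ Real.exp (-(n:ℝ) * (klDiv' Q P + shEnt Q)) := by
      have h := pmass_le_exp hP0 w0
      rwa [hw0Q] at h
    have hval : ∀ w : Fin n → A, empDist n w = Q → pmass P w = π := fun w hw =>
      pmass_eq_of_empDist_eq (hw.trans hw0Q.symm)
    set α : ℝ := cum P n M w0 with hαdef
    have hα0 : 0 ≤ α := cum_nonneg hP0 w0
    set Ns : ℕ := ((SmS P n M).filter (fun x => empDist n x = Q)).card with hNsdef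
    set J : Finset ℕ := (Finset.Icc 1 M).filter
      (fun j => ((Cr P n M j).filter (fun w => empDist n w = Q)).Nonempty) with hJdef
    -- inner sums as π * card
    have hinner : ∀ j, ∑ w ∈ (Cr P n M j).filter (fun w => empDist n w = Q), pmass P w
        = π * (((Cr P n M j).filter (fun w => empDist n w = Q)).card : ℝ) := by
      intro j
      rw [Finset.sum_congr rfl (fun w hw => hval w (Finset.mem_filter.mp hw).2),
        Finset.sum_const, nsmul_eq_mul, mul_comm]
    have hcard1 : ∀ j, ((Cr P n M j).filter (fun w => empDist n w = Q)).card ≤ 1 := by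
      intro j
      apply Finset.card_le_one.mpr
      intro w hw w' hw'
      exact Cr_subsingleton hP0 w (Finset.mem_of_mem_filter w hw)
        w' (Finset.mem_of_mem_filter w' hw')
    -- LHS ≤ π * card J
    have hLHS : ∑ j ∈ Finset.Icc 1 M,
        ∑ w ∈ (Cr P n M j).filter (fun w => empDist n w = Q), pmass P w
          ≤ π * (J.card : ℝ) := by
      rw [Finset.sum_congr rfl (fun j _ => hinner j), ← Finset.mul_sum]
      apply mul_le_mul_of_nonneg_left _ hπ0
      have hresum : ∑ j ∈ Finset.Icc 1 M,
          ((((Cr P n M j).filter (fun w => empDist n w = Q)).card : ℕ) : ℝ)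
            = ∑ j ∈ J, ((((Cr P n M j).filter (fun w => empDist n w = Q)).card : ℕ) : ℝ) := by
        symm
        apply Finset.sum_subset (Finset.filter_subset _ _)
        intro j hj hjJ
        have : ¬ ((Cr P n M j).filter (fun w => empDist n w = Q)).Nonempty := by
          intro hc
          exact hjJ (Finset.mem_filter.mpr ⟨hj, hc⟩)
        rw [Finset.not_nonempty_iff_eq_empty] at this
        rw [this]; simp
      rw [hresum]
      calc ∑ j ∈ J, ((((Cr P n M j).filter (fun w => empDist n w = Q)).card : ℕ) : ℝ)
          ≤ ∑ _j ∈ J, (1:ℝ) := by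
            apply Finset.sum_le_sum
            intro j _
            exact_mod_cast hcard1 j
        _ = (J.card : ℝ) := by simp
    -- geometry
    have hgeom : J ⊆ Finset.Ioc (⌊(M:ℝ) * α⌋₊) (⌊(M:ℝ) * α + (M:ℝ) * ((Ns:ℝ) * π)⌋₊) := by
      intro j hj
      obtain ⟨hjI, hjne⟩ := Finset.mem_filter.mp hj
      obtain ⟨w, hw⟩ := hjne
      have hwCr : w ∈ Cr P n M j := Finset.mem_of_mem_filter w hw
      have hwQ : empDist n w = Q := (Finset.mem_filter.mp hw).2
      obtain ⟨hwS, hwb, hwc⟩ := Finset.mem_filter.mp hwCr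
      have hwTQ : w ∈ (SmS P n M).filter (fun x => empDist n x = Q) :=
        Finset.mem_filter.mpr ⟨hwS, hwQ⟩
      have hαw : α ≤ cum P n M w := cum_mono hP0 (hw0min w hwTQ)
      have hpw : pmass P w = π := hval w hwQ
      -- upper bound on cum w + pmass w
      have hup : cum P n M w + pmass P w ≤ α + (Ns:ℝ) * π := by
        have hk0w : keyN w0 ≤ keyN w := hw0min w hwTQ
        have hsplit := Finset.sum_filter_add_sum_filter_not
          ((SmS P n M).filter (fun y => keyN y < keyN w))
          (fun y => keyN y < keyN w0) (pmass P)
        have hfirst : ((SmS P n M).filter (fun y => keyN y < keyN w)).filter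
            (fun y => keyN y < keyN w0) = (SmS P n M).filter (fun y => keyN y < keyN w0) := by
          rw [Finset.filter_filter]
          apply Finset.filter_congr
          intro y _
          constructor
          · rintro ⟨_, h2⟩; exact h2
          · intro h2; exact ⟨lt_of_lt_of_le h2 hk0w, h2⟩
        set U : Finset (Fin n → A) := ((SmS P n M).filter (fun y => keyN y < keyN w)).filter
          (fun y => ¬ keyN y < keyN w0) with hUdef
        have hUsub : U ⊆ ((SmS P n M).filter (fun x => empDist n x = Q)).erase w := by
          intro y hy
          obtain ⟨hy1, hy2⟩ := Finset.mem_filter.mp hy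
          obtain ⟨hyS, hyk⟩ := Finset.mem_filter.mp hy1
          have hyQ : empDist n y = Q := by
            have hb := emp_block (w := w0) (w' := w) (y := y)
              (hw0Q.trans hwQ.symm) (not_lt.mp hy2) hyk.le
            rw [hb, hw0Q]
          apply Finset.mem_erase.mpr
          refine ⟨?_, Finset.mem_filter.mpr ⟨hyS, hyQ⟩⟩
          intro hyw
          rw [hyw] at hyk
          exact lt_irrefl _ hyk
        have hNs1 : 1 ≤ Ns := Finset.card_pos.mpr ⟨w, hwTQ⟩
        have hUcard : (U.card : ℝ) ≤ (Ns:ℝ) - 1 := by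
          have h1 : U.card ≤ Ns - 1 := by
            have := Finset.card_le_card hUsub
            rwa [Finset.card_erase_of_mem hwTQ] at this
          have h1' : U.card + 1 ≤ Ns := by omega
          have h2 : (U.card : ℝ) + 1 ≤ (Ns : ℝ) := by exact_mod_cast h1'
          linarith
        have hUval : ∑ y ∈ U, pmass P y = (U.card : ℝ) * π := by
          rw [Finset.sum_congr rfl (fun y hy => hval y
            (Finset.mem_filter.mp (Finset.mem_of_mem_erase (hUsub hy))).2),
            Finset.sum_const, nsmul_eq_mul]
        have hcumw : cum P n M w = α + ∑ y ∈ U, pmass P y := by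
          rw [cum, ← hsplit, hfirst]
          rfl
        rw [hcumw, hUval, hpw]
        nlinarith
      rw [Finset.mem_Ioc]
      constructor
      · rw [Nat.floor_lt (mul_nonneg hM'.le hα0)]
        have h1 : cum P n M w < (j:ℝ)/M := hwb
        have h2 : (M:ℝ) * α ≤ (M:ℝ) * cum P n M w := by nlinarith
        have h3 : (M:ℝ) * cum P n M w < j := by
          rw [lt_div_iff₀ hM'] at h1
          nlinarith
        linarith
      · rw [Nat.le_floor_iff (by nlinarith)]
        have h1 : (j:ℝ)/M ≤ cum P n M w + pmass P w := hwc
        rw [div_le_iff₀ hM'] at h1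
        nlinarith
    have hMNsπ : 0 ≤ (M:ℝ) * ((Ns:ℝ) * π) :=
      mul_nonneg hM'.le (mul_nonneg (Nat.cast_nonneg _) hπ0)
    have hJcard : (J.card : ℝ) ≤ (M:ℝ) * ((Ns:ℝ) * π) + 1 := by
      have h1 : J.card ≤ (Finset.Ioc (⌊(M:ℝ) * α⌋₊)
          (⌊(M:ℝ) * α + (M:ℝ) * ((Ns:ℝ) * π)⌋₊)).card := Finset.card_le_card hgeom
      rw [Nat.card_Ioc] at h1
      have hab : ⌊(M:ℝ) * α⌋₊ ≤ ⌊(M:ℝ) * α + (M:ℝ) * ((Ns:ℝ) * π)⌋₊ :=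
        Nat.floor_le_floor (by linarith)
      have h2 : (J.card : ℝ) ≤ ((⌊(M:ℝ) * α + (M:ℝ) * ((Ns:ℝ) * π)⌋₊ : ℝ)
          - (⌊(M:ℝ) * α⌋₊ : ℝ)) := by
        have hcs := Nat.cast_sub (R := ℝ) hab
        have h3 : (J.card : ℝ) ≤ ((⌊(M:ℝ) * α + (M:ℝ) * ((Ns:ℝ) * π)⌋₊
            - ⌊(M:ℝ) * α⌋₊ : ℕ) : ℝ) := by exact_mod_cast h1
        rwa [hcs] at h3
      have hMα0 : 0 ≤ (M:ℝ) * α := mul_nonneg hM'.le hα0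
      have h4 : (⌊(M:ℝ) * α + (M:ℝ) * ((Ns:ℝ) * π)⌋₊ : ℝ) ≤ (M:ℝ) * α + (M:ℝ) * ((Ns:ℝ) * π) :=
        Nat.floor_le (by linarith)
      have h5 : (M:ℝ) * α - 1 < (⌊(M:ℝ) * α⌋₊ : ℝ) := by
        have := Nat.lt_floor_add_one ((M:ℝ) * α)
        linarith
      linarith
    -- assemble
    have hNsπ : (Ns:ℝ) * π ≤ ∑ x ∈ univ.filter (fun x : Fin n → A => empDist n x = Q),
        pmass P x := by
      have hsum : ∑ y ∈ (SmS P n M).filter (fun x => empDist n x = Q), pmass P y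
          = (Ns:ℝ) * π := by
        rw [Finset.sum_congr rfl (fun y hy => hval y (Finset.mem_filter.mp hy).2),
          Finset.sum_const, nsmul_eq_mul]
      rw [← hsum]
      apply Finset.sum_le_sum_of_subset_of_nonneg
      · intro y hy
        obtain ⟨hy1, hy2⟩ := Finset.mem_filter.mp hy
        exact Finset.mem_filter.mpr ⟨Finset.mem_univ y, hy2⟩
      · exact fun y _ _ => pmass_nonneg hP0 y
    calc ∑ j ∈ Finset.Icc 1 M,
        ∑ w ∈ (Cr P n M j).filter (fun w => empDist n w = Q), pmass P w
        ≤ π * (J.card : ℝ) := hLHS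
      _ ≤ π * ((M:ℝ) * ((Ns:ℝ) * π) + 1) := mul_le_mul_of_nonneg_left hJcard hπ0
      _ = (M:ℝ) * ((Ns:ℝ) * π) * π + π := by ring
      _ ≤ (M:ℝ) * (∑ x ∈ univ.filter (fun x : Fin n → A => empDist n x = Q), pmass P x)
            * Real.exp (-(n:ℝ) * (klDiv' Q P + shEnt Q)) + 1/(M:ℝ) := by
        have he : 0 < Real.exp (-(n:ℝ) * (klDiv' Q P + shEnt Q)) := Real.exp_pos _
        have hmul : (M:ℝ) * ((Ns:ℝ) * π) * π ≤ (M:ℝ)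
            * (∑ x ∈ univ.filter (fun x : Fin n → A => empDist n x = Q), pmass P x)
            * Real.exp (-(n:ℝ) * (klDiv' Q P + shEnt Q)) := by
          apply mul_le_mul
          · apply mul_le_mul_of_nonneg_left hNsπ hM'.le
          · exact hπexp
          · exact hπ0
          · positivity
        linarith
end PerQ

section Final
set_option linter.unusedSectionVars false
set_option maxHeartbeats 1000000
variable {A : Type*} [Fintype A]
variable {P : A → ℝ} {n M : ℕ}

lemma crossTotal (hP0 : ∀ a, 0 ≤ P a) (hM : 0 < M) :
    ∑ j ∈ Finset.Icc 1 M, CrS P n M j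
      ≤ (∑ Q ∈ typeSet A n, (M:ℝ)
            * (∑ x ∈ univ.filter (fun x : Fin n → A => empDist n x = Q), pmass P x)
            * Real.exp (-(n:ℝ) * (klDiv' Q P + shEnt Q)))
        + ((typeSet A n).card : ℝ) * (1/(M:ℝ)) := by
  have hpart : ∀ j, CrS P n M j = ∑ Q ∈ typeSet A n,
      ∑ w ∈ (Cr P n M j).filter (fun w => empDist n w = Q), pmass P w := by
    intro j
    rw [CrS]
    exact (Finset.sum_fiberwise_of_maps_to
      (fun w _ => Finset.mem_image_of_mem (empDist n) (Finset.mem_univ w)) _).symm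
  calc ∑ j ∈ Finset.Icc 1 M, CrS P n M j
      = ∑ Q ∈ typeSet A n, ∑ j ∈ Finset.Icc 1 M,
          ∑ w ∈ (Cr P n M j).filter (fun w => empDist n w = Q), pmass P w := by
        rw [Finset.sum_congr rfl (fun j _ => hpart j)]
        exact Finset.sum_comm
    _ ≤ ∑ Q ∈ typeSet A n, ((M:ℝ)
            * (∑ x ∈ univ.filter (fun x : Fin n → A => empDist n x = Q), pmass P x)
            * Real.exp (-(n:ℝ) * (klDiv' Q P + shEnt Q)) + 1/(M:ℝ)) :=
        Finset.sum_le_sum (fun Q _ => perQ hP0 hM Q)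
    _ = _ := by
        rw [Finset.sum_add_distrib, Finset.sum_const, nsmul_eq_mul]

theorem stmt_11' {A : Type*} [Fintype A]
    (P : A → ℝ) (hP0 : ∀ a, 0 ≤ P a) (hP1 : ∑ a, P a = 1)
    (n : ℕ) (M : ℕ) (hM : 0 < M) :
    ∃ f : (Fin n → A) → Fin M,
      ∑ m : Fin M,
          |(∑ aa ∈ univ.filter (fun aa : Fin n → A => f aa = m), ∏ i, P (aa i))
            - 1 / (M : ℝ)|
        ≤ 2 * (∑ aa ∈ univ.filter
              (fun aa : Fin n → A => 1 / (M : ℝ) ≤ ∏ i, P (aa i)), ∏ i, P (aa i))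
          + 2 * ∑ Q ∈ typeSet A n, (M : ℝ)
              * (∑ aa ∈ univ.filter (fun aa : Fin n → A => empDist n aa = Q),
                  ∏ i, P (aa i))
              * Real.exp (-(n : ℝ) * (klDiv' Q P + shEnt Q))
          + 2 * ((typeSet A n).card : ℝ) / M := by
  have hM' : (0:ℝ) < M := by exact_mod_cast hM
  set f : (Fin n → A) → Fin M := fun x =>
    if (1:ℝ)/M ≤ pmass P x then (⟨0, hM⟩ : Fin M) else ⟨binN P n M x, binN_lt hM x⟩
    with hfdef
  refine ⟨f, ?_⟩
  show ∑ m : Fin M,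
          |(∑ aa ∈ univ.filter (fun aa : Fin n → A => f aa = m), pmass P aa)
            - 1 / (M : ℝ)|
        ≤ 2 * (∑ aa ∈ univ.filter
              (fun aa : Fin n → A => 1 / (M : ℝ) ≤ pmass P aa), pmass P aa)
          + 2 * ∑ Q ∈ typeSet A n, (M : ℝ)
              * (∑ aa ∈ univ.filter (fun aa : Fin n → A => empDist n aa = Q), pmass P aa)
              * Real.exp (-(n : ℝ) * (klDiv' Q P + shEnt Q))
          + 2 * ((typeSet A n).card : ℝ) / M
  set B : ℝ := ∑ aa ∈ univ.filter
      (fun aa : Fin n → A => 1 / (M : ℝ) ≤ pmass P aa), pmass P aa with hBdef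
  have hB0 : 0 ≤ B := Finset.sum_nonneg fun x _ => pmass_nonneg hP0 x
  -- small fibers via f equal binN fibers
  have hfib : ∀ m : Fin M, (SmS P n M).filter (fun y => f y = m)
      = (SmS P n M).filter (fun y => binN P n M y = (m : ℕ)) := by
    intro m
    apply Finset.filter_congr
    intro y hy
    have hyS : ¬ ((1:ℝ)/M ≤ pmass P y) := (Finset.mem_filter.mp hy).2
    rw [hfdef]
    simp only [if_neg hyS]
    simp [Fin.ext_iff]
  -- decomposition of each bin
  have hsplit_m : ∀ m : Fin M,
      (∑ aa ∈ univ.filter (fun aa : Fin n → A => f aa = m), pmass P aa)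
        = (∑ y ∈ (SmS P n M).filter (fun y => binN P n M y = (m : ℕ)), pmass P y)
          + ∑ x ∈ (univ.filter (fun x : Fin n → A => (1:ℝ)/M ≤ pmass P x)).filter
              (fun x => f x = m), pmass P x := by
    intro m
    have h1 := Finset.sum_filter_add_sum_filter_not
      (univ.filter (fun aa : Fin n → A => f aa = m))
      (fun x => (1:ℝ)/M ≤ pmass P x) (pmass P)
    have e1 : (univ.filter (fun aa : Fin n → A => f aa = m)).filter
        (fun x => (1:ℝ)/M ≤ pmass P x)
        = (univ.filter (fun x : Fin n → A => (1:ℝ)/M ≤ pmass P x)).filter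
            (fun x => f x = m) := Finset.filter_comm _ _ _
    have e2 : (univ.filter (fun aa : Fin n → A => f aa = m)).filter
        (fun x => ¬ ((1:ℝ)/M ≤ pmass P x))
        = (SmS P n M).filter (fun y => binN P n M y = (m : ℕ)) := by
      rw [Finset.filter_comm]
      exact hfib m
    rw [← h1, e1, e2]
    ring
  -- step 1
  have step1 : ∑ m : Fin M,
      |(∑ aa ∈ univ.filter (fun aa : Fin n → A => f aa = m), pmass P aa) - 1/(M:ℝ)|
        ≤ (∑ m : Fin M,
            |(∑ y ∈ (SmS P n M).filter (fun y => binN P n M y = (m : ℕ)), pmass P y)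
              - 1/(M:ℝ)|) + B := by
    have hb : ∑ m : Fin M, ∑ x ∈ (univ.filter
        (fun x : Fin n → A => (1:ℝ)/M ≤ pmass P x)).filter (fun x => f x = m), pmass P x
          = B := Finset.sum_fiberwise _ _ _
    calc ∑ m : Fin M,
        |(∑ aa ∈ univ.filter (fun aa : Fin n → A => f aa = m), pmass P aa) - 1/(M:ℝ)|
        ≤ ∑ m : Fin M,
            (|(∑ y ∈ (SmS P n M).filter (fun y => binN P n M y = (m : ℕ)), pmass P y)
              - 1/(M:ℝ)|
             + ∑ x ∈ (univ.filter (fun x : Fin n → A => (1:ℝ)/M ≤ pmass P x)).filter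
                 (fun x => f x = m), pmass P x) := by
          apply Finset.sum_le_sum
          intro m _
          rw [hsplit_m m]
          have hbm0 : 0 ≤ ∑ x ∈ (univ.filter
              (fun x : Fin n → A => (1:ℝ)/M ≤ pmass P x)).filter (fun x => f x = m),
                pmass P x := Finset.sum_nonneg fun x _ => pmass_nonneg hP0 x
          calc |(∑ y ∈ (SmS P n M).filter (fun y => binN P n M y = (m : ℕ)), pmass P y)
              + (∑ x ∈ (univ.filter (fun x : Fin n → A => (1:ℝ)/M ≤ pmass P x)).filter
                  (fun x => f x = m), pmass P x) - 1/(M:ℝ)|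
              = |((∑ y ∈ (SmS P n M).filter (fun y => binN P n M y = (m : ℕ)), pmass P y)
                - 1/(M:ℝ))
                + (∑ x ∈ (univ.filter (fun x : Fin n → A => (1:ℝ)/M ≤ pmass P x)).filter
                    (fun x => f x = m), pmass P x)| := by ring_nf
            _ ≤ _ := (abs_add_le _ _).trans (by rw [abs_of_nonneg hbm0])
      _ = _ := by rw [Finset.sum_add_distrib, hb]
  -- W and B
  have hWB : (∑ y ∈ SmS P n M, pmass P y) + B = 1 := by
    have h := Finset.sum_filter_add_sum_filter_not univ
      (fun x : Fin n → A => (1:ℝ)/M ≤ pmass P x) (pmass P)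
    rw [pmass_total hP1 n] at h
    have hs : (univ.filter (fun x : Fin n → A => ¬ ((1:ℝ)/M ≤ pmass P x))) = SmS P n M := rfl
    rw [hs] at h
    linarith
  -- sum of small fibers
  have hsum_s : ∑ m : Fin M,
      (∑ y ∈ (SmS P n M).filter (fun y => binN P n M y = (m : ℕ)), pmass P y)
        = ∑ y ∈ SmS P n M, pmass P y := by
    rw [Finset.sum_congr rfl (fun m _ => by rw [← hfib m])]
    exact Finset.sum_fiberwise _ _ _
  -- step 2
  have habs : ∀ x : ℝ, |x| = 2 * max x 0 - x := by
    intro x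
    rcases le_total x 0 with h | h
    · rw [abs_of_nonpos h, max_eq_right h]; ring
    · rw [abs_of_nonneg h, max_eq_left h]; ring
  have hsum1M : ∑ _m : Fin M, (1/(M:ℝ)) = 1 := by
    rw [Finset.sum_const, Finset.card_univ, Fintype.card_fin, nsmul_eq_mul]
    field_simp
  have hsub : ∑ m : Fin M,
      ((∑ y ∈ (SmS P n M).filter (fun y => binN P n M y = (m : ℕ)), pmass P y) - 1/(M:ℝ))
        = (∑ y ∈ SmS P n M, pmass P y) - 1 := by
    rw [Finset.sum_sub_distrib, hsum_s, hsum1M]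
  have step2 : ∑ m : Fin M,
      |(∑ y ∈ (SmS P n M).filter (fun y => binN P n M y = (m : ℕ)), pmass P y) - 1/(M:ℝ)|
        = 2 * (∑ m : Fin M,
            max ((∑ y ∈ (SmS P n M).filter (fun y => binN P n M y = (m : ℕ)), pmass P y)
              - 1/(M:ℝ)) 0) + B := by
    rw [Finset.sum_congr rfl (fun m _ => habs _), Finset.sum_sub_distrib,
      ← Finset.mul_sum, hsub]
    linarith [hWB]
  have step3 : ∑ m : Fin M,
      max ((∑ y ∈ (SmS P n M).filter (fun y => binN P n M y = (m : ℕ)), pmass P y)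
        - 1/(M:ℝ)) 0 ≤ ∑ j ∈ Finset.Icc 1 M, CrS P n M j := by
    calc ∑ m : Fin M,
        max ((∑ y ∈ (SmS P n M).filter (fun y => binN P n M y = (m : ℕ)), pmass P y)
          - 1/(M:ℝ)) 0
        ≤ ∑ m : Fin M, CrS P n M ((m : ℕ)+1) := by
          apply Finset.sum_le_sum
          intro m _
          exact max_le (C1 hP0 hP1 hM m.isLt) (CrS_nonneg hP0 _)
      _ = ∑ i ∈ Finset.range M, CrS P n M (i+1) :=
          Fin.sum_univ_eq_sum_range (fun i => CrS P n M (i+1)) M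
      _ = ∑ j ∈ Finset.Icc 1 M, CrS P n M j := by
          rw [← Finset.Ico_add_one_right_eq_Icc, Finset.sum_Ico_eq_sum_range]
          exact Finset.sum_congr rfl (fun i _ => by rw [add_comm])
  have hcross := crossTotal (P := P) (n := n) hP0 hM
  calc ∑ m : Fin M,
      |(∑ aa ∈ univ.filter (fun aa : Fin n → A => f aa = m), pmass P aa) - 1/(M:ℝ)|
      ≤ (∑ m : Fin M,
          |(∑ y ∈ (SmS P n M).filter (fun y => binN P n M y = (m : ℕ)), pmass P y)
            - 1/(M:ℝ)|) + B := step1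
    _ = 2 * (∑ m : Fin M,
          max ((∑ y ∈ (SmS P n M).filter (fun y => binN P n M y = (m : ℕ)), pmass P y)
            - 1/(M:ℝ)) 0) + B + B := by rw [step2]
    _ ≤ 2 * (∑ j ∈ Finset.Icc 1 M, CrS P n M j) + B + B := by linarith [step3]
    _ ≤ 2 * ((∑ Q ∈ typeSet A n, (M:ℝ)
            * (∑ x ∈ univ.filter (fun x : Fin n → A => empDist n x = Q), pmass P x)
            * Real.exp (-(n:ℝ) * (klDiv' Q P + shEnt Q)))
          + ((typeSet A n).card : ℝ) * (1/(M:ℝ))) + B + B := by linarith [hcross]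
    _ = 2 * B
          + 2 * ∑ Q ∈ typeSet A n, (M : ℝ)
              * (∑ aa ∈ univ.filter (fun aa : Fin n → A => empDist n aa = Q), pmass P aa)
              * Real.exp (-(n : ℝ) * (klDiv' Q P + shEnt Q))
          + 2 * ((typeSet A n).card : ℝ) / M := by ring
end Final


/-- For every probability distribution `P` on a finite set `A`, every `n` and every
positive integer `M`, there is a function `f : Aⁿ → Fin M` whose pushforward of `Pⁿ` is
close to uniform, with the bound expressed via the method of types. -/
theorem stmt_11 {A : Type*} [Fintype A]
    (P : A → ℝ) (hP0 : ∀ a, 0 ≤ P a) (hP1 : ∑ a, P a = 1)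
    (n : ℕ) (M : ℕ) (hM : 0 < M) :
    ∃ f : (Fin n → A) → Fin M,
      ∑ m : Fin M,
          |(∑ aa ∈ univ.filter (fun aa : Fin n → A => f aa = m), ∏ i, P (aa i))
            - 1 / (M : ℝ)|
        ≤ 2 * (∑ aa ∈ univ.filter
              (fun aa : Fin n → A => 1 / (M : ℝ) ≤ ∏ i, P (aa i)), ∏ i, P (aa i))
          + 2 * ∑ Q ∈ typeSet A n, (M : ℝ)
              * (∑ aa ∈ univ.filter (fun aa : Fin n → A => empDist n aa = Q),
                  ∏ i, P (aa i))
              * Real.exp (-(n : ℝ) * (klDiv' Q P + shEnt Q))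
          + 2 * ((typeSet A n).card : ℝ) / M := by
  exact stmt_11' P hP0 hP1 n M hM
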